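/- Fixed-point optimality of federated posterior correction for isotropic Gaussians: suppose vectors m_jnt, m₁,…,m_t ∈ R^d and site vectors λ̂₁,…,λ̂_t ∈ R^d satisfy (i) m_jnt = −Σᵢλ̂ᵢ, (ii) each mᵢ minimizes m ↦ Lᵢ(m) − mᵀλ̂ᵢ + (ρ/2)‖m − m_jnt‖² for differentiable convex Lᵢ and ρ > 0, and (iii) λ̂ᵢ = ∇Lᵢ(mᵢ). Then mᵢ = m_jnt for all i, and m_jnt satisfies the joint stationarity condition Σᵢ∇Lᵢ(m_jnt) + m_jnt = 0, i.e., m_jnt minimizes Σᵢ Lᵢ(m) + (1/2)‖m‖². -/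

import Mathlib

open Set

/-- Directional derivative along a line in terms of the gradient. -/
lemma hasDerivAt_line {F : Type*} [NormedAddCommGroup F]
    [InnerProductSpace ℝ F] [CompleteSpace F] {f : F → ℝ}
    (hdiff : Differentiable ℝ f) (x v : F) :
    HasDerivAt (fun s : ℝ => f (x + s • v)) ((inner ℝ (gradient f x) v : ℝ)) 0 := by
  have hline : HasDerivAt (fun s : ℝ => x + s • v) v 0 := by
    simpa using ((hasDerivAt_id (0 : ℝ)).smul_const v).const_add x
  have hgrad : HasFDerivAt f (InnerProductSpace.toDual ℝ F (gradient f x))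
      (x + (0 : ℝ) • v) := by
    simpa using ((hdiff x).hasGradientAt).hasFDerivAt
  have h := hgrad.comp_hasDerivAt 0 hline
  rw [InnerProductSpace.toDual_apply_apply] at h
  exact h

/-- Gradient inequality for convex differentiable functions on a real Hilbert space. -/
lemma convex_gradient_inequality {F : Type*} [NormedAddCommGroup F]
    [InnerProductSpace ℝ F] [CompleteSpace F] {f : F → ℝ}
    (hconv : ConvexOn ℝ Set.univ f) (hdiff : Differentiable ℝ f) (x y : F) :
    f x + (inner ℝ (gradient f x) (y - x) : ℝ) ≤ f y := by
  set g : ℝ → ℝ := fun s => f (x + s • (y - x)) with hg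
  have hg' : HasDerivAt g ((inner ℝ (gradient f x) (y - x) : ℝ)) 0 :=
    hasDerivAt_line hdiff x (y - x)
  have hgconv : ConvexOn ℝ Set.univ g := by
    have haff : ConvexOn ℝ ((AffineMap.lineMap x y : ℝ →ᵃ[ℝ] F) ⁻¹' Set.univ)
        (f ∘ (AffineMap.lineMap x y : ℝ →ᵃ[ℝ] F)) :=
      hconv.comp_affineMap _
    have : (f ∘ (AffineMap.lineMap x y : ℝ →ᵃ[ℝ] F)) = g := by
      funext s
      simp [g, AffineMap.lineMap_apply, add_comm]
    simpa [this] using haff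
  have hslope := hgconv.le_slope_of_hasDerivAt (mem_univ (0 : ℝ)) (mem_univ (1 : ℝ))
    zero_lt_one hg'
  have hs : slope g 0 1 = f y - f x := by
    simp [slope_def_field, g]
  rw [hs] at hslope
  linarith

/-- Fixed-point optimality of federated posterior correction (isotropic Gaussian case):
at a fixed point, all local means equal the joint mean, which satisfies the joint
stationarity condition and minimizes the joint objective. -/
theorem federated_posterior_correction_fixed_point (d t : ℕ) (ρ : ℝ) (hρ : 0 < ρ)
    (L : Fin t → EuclideanSpace ℝ (Fin d) → ℝ)
    (hconv : ∀ i, ConvexOn ℝ Set.univ (L i)) (hdiff : ∀ i, Differentiable ℝ (L i))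
    (mjnt : EuclideanSpace ℝ (Fin d)) (mi : Fin t → EuclideanSpace ℝ (Fin d))
    (lam : Fin t → EuclideanSpace ℝ (Fin d))
    (h1 : mjnt = -∑ i, lam i)
    (h2 : ∀ i, ∀ m : EuclideanSpace ℝ (Fin d),
      L i (mi i) - (inner ℝ (mi i) (lam i) : ℝ) + (ρ / 2) * ‖mi i - mjnt‖ ^ 2 ≤
        L i m - (inner ℝ (m) (lam i) : ℝ) + (ρ / 2) * ‖m - mjnt‖ ^ 2)
    (h3 : ∀ i, lam i = gradient (L i) (mi i)) :
    (∀ i, mi i = mjnt) ∧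
    ((∑ i, gradient (L i) mjnt) + mjnt = 0) ∧
    (∀ m : EuclideanSpace ℝ (Fin d),
      (∑ i, L i mjnt) + (1 / 2) * ‖mjnt‖ ^ 2 ≤ (∑ i, L i m) + (1 / 2) * ‖m‖ ^ 2) := by
  have hfix : ∀ i, mi i = mjnt := by
    intro i
    set p := mi i with hp
    set w : EuclideanSpace ℝ (Fin d) := p - mjnt with hw
    -- 1-D restriction of the local objective along direction w
    set g : ℝ → ℝ := fun s =>
      L i (p + s • w) - (inner ℝ (p + s • w) (lam i) : ℝ) +
        (ρ / 2) * ‖(p + s • w) - mjnt‖ ^ 2 with hgdef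
    have hglob : ∀ s : ℝ, g 0 ≤ g s := by
      intro s
      have := h2 i (p + s • w)
      simpa [g] using this
    have hmin : IsLocalMin g 0 := Filter.Eventually.of_forall hglob
    -- derivative of g at 0
    have hd1 : HasDerivAt (fun s : ℝ => L i (p + s • w))
        ((inner ℝ (gradient (L i) p) w : ℝ)) 0 := hasDerivAt_line (hdiff i) p w
    have hlinew : HasDerivAt (fun s : ℝ => p + s • w) w 0 := by
      simpa using ((hasDerivAt_id (0 : ℝ)).smul_const w).const_add p
    have hd2 : HasDerivAt (fun s : ℝ => (inner ℝ (p + s • w) (lam i) : ℝ))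
        ((inner ℝ (w) (lam i) : ℝ)) 0 := by
      have := hlinew.inner ℝ (hasDerivAt_const (0 : ℝ) (lam i))
      simpa using this
    have hd3 : HasDerivAt (fun s : ℝ => (ρ / 2) * ‖(p + s • w) - mjnt‖ ^ 2)
        (ρ * (inner ℝ w w : ℝ)) 0 := by
      have hu : HasDerivAt (fun s : ℝ => (p + s • w) - mjnt) w 0 := hlinew.sub_const mjnt
      have hi := hu.inner ℝ hu
      have heq : (fun s : ℝ => (ρ / 2) * ‖(p + s • w) - mjnt‖ ^ 2) =
          fun s : ℝ => (ρ / 2) * (inner ℝ ((p + s • w) - mjnt) ((p + s • w) - mjnt) : ℝ) := by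
        funext s; rw [real_inner_self_eq_norm_sq]
      rw [heq]
      have := hi.const_mul (ρ / 2)
      have h0 : p + (0 : ℝ) • w - mjnt = w := by simp [hw]
      rw [h0] at this
      exact this.congr_deriv (by ring)
    have hdg : HasDerivAt g
        ((inner ℝ (gradient (L i) p) w : ℝ) - (inner ℝ w (lam i) : ℝ) + ρ * (inner ℝ w w : ℝ)) 0 :=
      (hd1.sub hd2).add hd3
    have hzero := hmin.hasDerivAt_eq_zero hdg
    have hcancel : (inner ℝ (gradient (L i) p) w : ℝ) = (inner ℝ w (lam i) : ℝ) := by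
      rw [h3 i, ← hp, real_inner_comm]
    rw [hcancel] at hzero
    have : (inner ℝ w w : ℝ) = 0 := by
      have h' : ρ * (inner ℝ w w : ℝ) = 0 := by linarith [hzero]
      rcases mul_eq_zero.mp h' with h | h
      · exact absurd h (ne_of_gt hρ)
      · exact h
    have : w = 0 := inner_self_eq_zero.mp this
    have := sub_eq_zero.mp (hw ▸ this)
    exact this
  have hlam : ∀ i, lam i = gradient (L i) mjnt := by
    intro i; rw [h3 i, hfix i]
  have hstat : (∑ i, gradient (L i) mjnt) + mjnt = 0 := by
    have hsum : (∑ i, gradient (L i) mjnt) = ∑ i, lam i :=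
      Finset.sum_congr rfl fun i _ => (hlam i).symm
    rw [hsum, h1]; abel
  refine ⟨hfix, hstat, ?_⟩
  intro m
  have hsum : (∑ i, L i mjnt) + (inner ℝ (∑ i, gradient (L i) mjnt) (m - mjnt) : ℝ) ≤
      ∑ i, L i m := by
    have hle : ∀ i ∈ Finset.univ, L i mjnt + (inner ℝ (gradient (L i) mjnt) (m - mjnt) : ℝ)
        ≤ L i m := fun i _ => convex_gradient_inequality (hconv i) (hdiff i) mjnt m
    calc (∑ i, L i mjnt) + (inner ℝ (∑ i, gradient (L i) mjnt) (m - mjnt) : ℝ)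
        = ∑ i, (L i mjnt + (inner ℝ (gradient (L i) mjnt) (m - mjnt) : ℝ)) := by
          rw [Finset.sum_add_distrib, sum_inner]
      _ ≤ ∑ i, L i m := Finset.sum_le_sum hle
  have hkey : (∑ i, gradient (L i) mjnt) = -mjnt := by
    linear_combination (norm := module) hstat
  rw [hkey] at hsum
  have hin : (inner ℝ (-mjnt) (m - mjnt) : ℝ) =
      -(inner ℝ mjnt m : ℝ) + ‖mjnt‖ ^ 2 := by
    rw [inner_neg_left, inner_sub_right, real_inner_self_eq_norm_sq]
    ring
  rw [hin] at hsum
  nlinarith [sq_nonneg (‖m‖ - ‖mjnt‖), real_inner_le_norm mjnt m,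
    norm_nonneg m, norm_nonneg mjnt]
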